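/- Let L₁ ≥ L₀ > 0 and ρ₀ > 0. There is a constant C > 0, depending only on L₀, L₁, ρ₀, such that for every integer m ≥ 2, every r̄ ≥ ρ₀, every x̄″ ∈ ℝ⁴, every λ ∈ [L₀ m², L₁ m²], with z_j = (r̄ cos(2(j−1)π/m), r̄ sin(2(j−1)π/m), x̄″) ∈ ℝ² × ℝ⁴, and every y ∈ ℝ⁶ satisfying |y − λ z_j| ≥ |y − λ z₁| for all j = 1, …, m, one has Σ_{j=2}^{m} (1+|y−λz_j|)^{−4} ≤ C (1+|y−λz₁|)^{−7/2}. -/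

import Mathlib

open Real

noncomputable section

abbrev E6 : Type := EuclideanSpace ℝ (Fin 6)
abbrev E4 : Type := EuclideanSpace ℝ (Fin 4)

/-- Build a point of `ℝ⁶ = ℝ² × ℝ⁴` from two real coordinates and a point of `ℝ⁴`. -/
def mk6 (a b : ℝ) (w : E4) : E6 :=
  (EuclideanSpace.equiv (Fin 6) ℝ).symm fun i =>
    if (i : ℕ) = 0 then a else if (i : ℕ) = 1 then b
    else w ⟨(i : ℕ) - 2, by have := i.isLt; omega⟩

/-- The `j`-th point `z_j = (r̄ cos(2(j-1)π/m), r̄ sin(2(j-1)π/m), x̄'')`. -/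
def zpt (r : ℝ) (w : E4) (m j : ℕ) : E6 :=
  mk6 (r * Real.cos (2 * ((j : ℝ) - 1) * π / m)) (r * Real.sin (2 * ((j : ℝ) - 1) * π / m)) w

lemma sum_inv_sqrt_le (n : ℕ) : ∑ k ∈ Finset.Icc 1 n, (Real.sqrt k)⁻¹ ≤ 2 * Real.sqrt n := by
  induction n with
  | zero => simp
  | succ n ih =>
    rw [Finset.sum_Icc_succ_top (by omega)]
    have h1 : Real.sqrt n ^ 2 = n := Real.sq_sqrt (by positivity)
    have h2 : Real.sqrt ((n:ℝ)+1) ^ 2 = (n:ℝ)+1 := Real.sq_sqrt (by positivity)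
    have h3 : (0:ℝ) < Real.sqrt (n+1) := Real.sqrt_pos.2 (by positivity)
    have h4 : (0:ℝ) ≤ Real.sqrt n := Real.sqrt_nonneg _
    have key : (Real.sqrt (n+1:ℕ))⁻¹ ≤ 2 * Real.sqrt (n+1) - 2 * Real.sqrt n := by
      rw [inv_le_iff_one_le_mul₀ (by positivity)]
      push_cast
      nlinarith [sq_nonneg (Real.sqrt ((n:ℝ)+1) - Real.sqrt n)]
    push_cast at key ⊢
    nlinarith [key, ih]

lemma sin_pi_mul_ge (x : ℝ) (h0 : 0 ≤ x) (h1 : x ≤ 1) : 2 * x * (1 - x) ≤ Real.sin (π * x) := by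
  rcases le_or_gt x (1/2) with hx | hx
  · have := Real.mul_le_sin (x := π * x) (by positivity) (by nlinarith [Real.pi_pos])
    have hπ : (0:ℝ) < π := Real.pi_pos
    have : 2 * x ≤ Real.sin (π * x) := by
      calc 2 * x = 2 / π * (π * x) := by field_simp
      _ ≤ _ := this
    nlinarith
  · have h1x : Real.sin (π * x) = Real.sin (π * (1 - x)) := by
      rw [show π * (1-x) = π - π * x by ring, Real.sin_pi_sub]
    have := Real.mul_le_sin (x := π * (1 - x)) (by nlinarith [Real.pi_pos]) (by nlinarith [Real.pi_pos])
    have hπ : (0:ℝ) < π := Real.pi_pos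
    have : 2 * (1 - x) ≤ Real.sin (π * (1 - x)) := by
      calc 2 * (1-x) = 2 / π * (π * (1-x)) := by field_simp
      _ ≤ _ := this
    nlinarith

lemma inv_sqrt_mul_le (a b : ℝ) (ha : 0 < a) (hb : 0 < b) :
    (Real.sqrt a * Real.sqrt b)⁻¹ ≤ (Real.sqrt (a+b))⁻¹ * ((Real.sqrt a)⁻¹ + (Real.sqrt b)⁻¹) := by
  have sa : (0:ℝ) < Real.sqrt a := Real.sqrt_pos.2 ha
  have sb : (0:ℝ) < Real.sqrt b := Real.sqrt_pos.2 hb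
  have sab : (0:ℝ) < Real.sqrt (a+b) := Real.sqrt_pos.2 (by linarith)
  have hsub : Real.sqrt (a+b) ≤ Real.sqrt a + Real.sqrt b := by
    have : a + b ≤ (Real.sqrt a + Real.sqrt b)^2 := by
      nlinarith [Real.sq_sqrt ha.le, Real.sq_sqrt hb.le, sa, sb]
    calc Real.sqrt (a+b) ≤ Real.sqrt ((Real.sqrt a + Real.sqrt b)^2) := Real.sqrt_le_sqrt this
    _ = Real.sqrt a + Real.sqrt b := Real.sqrt_sq (by positivity)
  rw [inv_le_iff_one_le_mul₀ (by positivity)]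
  have : (Real.sqrt (a + b))⁻¹ * ((Real.sqrt a)⁻¹ + (Real.sqrt b)⁻¹) * (Real.sqrt a * Real.sqrt b)
      = (Real.sqrt a + Real.sqrt b) / Real.sqrt (a+b) := by
    field_simp; ring
  rw [this, le_div_iff₀ sab]
  linarith

lemma norm_zpt_sub (r : ℝ) (hr : 0 ≤ r) (w : E4) (m j : ℕ) :
    ‖zpt r w m j - zpt r w m 1‖ = 2 * r * |Real.sin (((j:ℝ) - 1) * π / m)| := by
  have hnorm : ∀ v : E6, ‖v‖ = Real.sqrt (∑ i, v i ^ 2) := fun v => by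
    rw [EuclideanSpace.norm_eq]; congr 1; apply Finset.sum_congr rfl; intro i _
    rw [Real.norm_eq_abs, sq_abs]
  rw [hnorm]
  set θ := 2 * ((j:ℝ) - 1) * π / m with hθ
  have hsum : ∑ i, (zpt r w m j - zpt r w m 1) i ^ 2
      = (r * Real.cos θ - r) ^ 2 + (r * Real.sin θ) ^ 2 := by
    simp only [Fin.sum_univ_six]
    simp [zpt, mk6, EuclideanSpace.equiv, show ((2:Fin 6):ℕ) = 2 from rfl,
      show ((3:Fin 6):ℕ) = 3 from rfl, show ((4:Fin 6):ℕ) = 4 from rfl,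
      show ((5:Fin 6):ℕ) = 5 from rfl]
    rfl
  rw [hsum]
  have hφ : θ = 2 * (((j:ℝ) - 1) * π / m) := by rw [hθ]; ring
  set φ := ((j:ℝ) - 1) * π / m
  have hc : Real.cos θ = 1 - 2 * Real.sin φ ^ 2 := by
    rw [hφ, Real.cos_two_mul']
    have h := Real.sin_sq_add_cos_sq φ; linarith
  have : (r * Real.cos θ - r) ^ 2 + (r * Real.sin θ) ^ 2 = (2 * r * |Real.sin φ|) ^ 2 := by
    have hs : Real.sin θ = 2 * Real.sin φ * Real.cos φ := by rw [hφ, Real.sin_two_mul]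
    rw [hc, hs,
      show (r * (1 - 2 * Real.sin φ ^ 2) - r) ^ 2 + (r * (2 * Real.sin φ * Real.cos φ)) ^ 2
        = 4 * r ^ 2 * Real.sin φ ^ 2 * (Real.sin φ ^ 2 + Real.cos φ ^ 2) from by ring,
      Real.sin_sq_add_cos_sq,
      show (2 * r * |Real.sin φ|) ^ 2 = 4 * r ^ 2 * |Real.sin φ| ^ 2 from by ring, sq_abs]
    ring
  rw [this, Real.sqrt_sq (by positivity)]


set_option maxHeartbeats 1000000 in
/-- **Sector decay estimate.**  There is `C > 0`, depending only on `L₀, L₁, ρ₀`, such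
that for all `m ≥ 2`, `r̄ ≥ ρ₀`, `x̄'' ∈ ℝ⁴`, `λ ∈ [L₀ m², L₁ m²]` and every `y ∈ ℝ⁶`
with `|y - λ z_j| ≥ |y - λ z₁|` for all `j`,
`∑_{j=2}^m (1+|y-λz_j|)^(-4) ≤ C (1+|y-λz₁|)^(-7/2)`. -/
theorem sector_sum_decay (L₀ L₁ ρ₀ : ℝ) (hL₀ : 0 < L₀) (hL : L₀ ≤ L₁) (hρ₀ : 0 < ρ₀) :
    ∃ C : ℝ, 0 < C ∧ ∀ m : ℕ, 2 ≤ m → ∀ r : ℝ, ρ₀ ≤ r → ∀ w : E4, ∀ l : ℝ,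
      L₀ * (m : ℝ) ^ 2 ≤ l → l ≤ L₁ * (m : ℝ) ^ 2 → ∀ y : E6,
      (∀ j ∈ Finset.Icc 1 m, ‖y - l • zpt r w m 1‖ ≤ ‖y - l • zpt r w m j‖) →
      ∑ j ∈ Finset.Icc 2 m, (1 + ‖y - l • zpt r w m j‖) ^ (-(4 : ℝ)) ≤
        C * (1 + ‖y - l • zpt r w m 1‖) ^ (-(7 / 2 : ℝ)) := by
  set c : ℝ := 2 * L₀ * ρ₀ with hc
  have hcpos : 0 < c := by positivity
  refine ⟨4 * (Real.sqrt c)⁻¹, by positivity, ?_⟩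
  intro m hm r hr w l hlow hhigh y h
  have hm0 : (0:ℝ) < m := by have : 0 < m := by omega
                             exact_mod_cast this
  have hl0 : (0:ℝ) < l := lt_of_lt_of_le (by positivity) hlow
  have hr0 : (0:ℝ) < r := lt_of_lt_of_le hρ₀ hr
  set d : ℝ := ‖y - l • zpt r w m 1‖ with hd
  have hd0 : (0:ℝ) ≤ d := norm_nonneg _
  -- pointwise bound
  have step : ∀ j ∈ Finset.Icc 2 m,
      (1 + ‖y - l • zpt r w m j‖) ^ (-(4 : ℝ)) ≤
      (1 + d) ^ (-(7/2 : ℝ)) * ((Real.sqrt c)⁻¹ *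
        (Real.sqrt ((j:ℝ) - 1) * Real.sqrt ((m:ℝ) + 1 - (j:ℝ)))⁻¹) := by
    intro j hj
    obtain ⟨hj2, hjm⟩ := Finset.mem_Icc.1 hj
    have hj2' : (2:ℝ) ≤ (j:ℝ) := by exact_mod_cast hj2
    have hjm' : (j:ℝ) ≤ (m:ℝ) := by exact_mod_cast hjm
    set dj : ℝ := ‖y - l • zpt r w m j‖ with hdj
    have hddj : d ≤ dj := h j (Finset.mem_Icc.2 ⟨by omega, hjm⟩)
    have hdj0 : (0:ℝ) ≤ dj := norm_nonneg _
    set A : ℝ := ((j:ℝ) - 1) * ((m:ℝ) + 1 - (j:ℝ)) with hA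
    have hA1 : (1:ℝ) ≤ (j:ℝ) - 1 := by linarith
    have hA2 : (1:ℝ) ≤ (m:ℝ) + 1 - (j:ℝ) := by linarith
    have hApos : (0:ℝ) < A := by rw [hA]; nlinarith
    -- distance between centers
    have hcent : c * A ≤ dj := by
      have hsep : 4 * l * r * (A / (m:ℝ)^2) ≤ ‖l • zpt r w m j - l • zpt r w m 1‖ := by
        rw [← smul_sub, norm_smul, Real.norm_eq_abs, abs_of_pos hl0,
          norm_zpt_sub r hr0.le]
        set x : ℝ := ((j:ℝ) - 1) / m with hx
        have hx0 : 0 ≤ x := by positivity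
        have hx1 : x ≤ 1 := by rw [hx, div_le_one hm0]; linarith
        have hsin : 2 * x * (1 - x) ≤ Real.sin (π * x) := sin_pi_mul_ge x hx0 hx1
        have hφx : ((j:ℝ) - 1) * π / m = π * x := by rw [hx]; ring
        have habs : Real.sin (π * x) ≤ |Real.sin (((j:ℝ) - 1) * π / m)| := by
          rw [hφx]; exact le_abs_self _
        have hxA : x * (1 - x) = A / (m:ℝ)^2 := by
          rw [hx, hA]; field_simp; ring
        have h2x : 2 * (A / (m:ℝ)^2) ≤ |Real.sin (((j:ℝ) - 1) * π / m)| := by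
          rw [← hxA]; nlinarith
        calc 4 * l * r * (A / (m:ℝ)^2) = l * (2 * r * (2 * (A / (m:ℝ)^2))) := by ring
        _ ≤ l * (2 * r * |Real.sin (((j:ℝ) - 1) * π / m)|) := by
            apply mul_le_mul_of_nonneg_left _ hl0.le
            apply mul_le_mul_of_nonneg_left h2x (by positivity)
        _ = _ := rfl
      have htri : ‖l • zpt r w m j - l • zpt r w m 1‖ ≤ d + dj := by
        calc ‖l • zpt r w m j - l • zpt r w m 1‖
            = ‖(y - l • zpt r w m 1) - (y - l • zpt r w m j)‖ := by
              congr 1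
              abel
        _ ≤ d + dj := by rw [hd, hdj]; exact norm_sub_le _ _
      have hlr : c * A ≤ 2 * l * r * (A / (m:ℝ)^2) := by
        rw [hc]
        have h1 : L₀ * (m:ℝ)^2 * r * (A / (m:ℝ)^2) ≤ l * r * (A / (m:ℝ)^2) := by
          apply mul_le_mul_of_nonneg_right (mul_le_mul_of_nonneg_right hlow hr0.le) (by positivity)
        have h2 : L₀ * ρ₀ * A ≤ L₀ * r * A :=
          mul_le_mul_of_nonneg_right (mul_le_mul_of_nonneg_left hr hL₀.le) hApos.le
        have h3 : L₀ * (m:ℝ)^2 * r * (A / (m:ℝ)^2) = L₀ * r * A := by field_simp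
        nlinarith
      linarith
    have hcA0 : (0:ℝ) < c * A := by positivity
    have hsplit : (1 + dj) ^ (-(4 : ℝ))
        = (1 + dj) ^ (-(7/2 : ℝ)) * (1 + dj) ^ (-(1/2 : ℝ)) := by
      rw [← Real.rpow_add (by linarith)]; norm_num
    rw [hsplit]
    have hb1 : (1 + dj) ^ (-(7/2 : ℝ)) ≤ (1 + d) ^ (-(7/2 : ℝ)) :=
      Real.rpow_le_rpow_of_nonpos (by linarith) (by linarith) (by norm_num)
    have hb2 : (1 + dj) ^ (-(1/2 : ℝ)) ≤ (c * A) ^ (-(1/2 : ℝ)) :=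
      Real.rpow_le_rpow_of_nonpos hcA0 (by linarith) (by norm_num)
    have hb3 : (c * A) ^ (-(1/2 : ℝ))
        = (Real.sqrt c)⁻¹ * (Real.sqrt ((j:ℝ) - 1) * Real.sqrt ((m:ℝ) + 1 - (j:ℝ)))⁻¹ := by
      rw [Real.rpow_neg hcA0.le, ← Real.sqrt_eq_rpow,
        Real.sqrt_mul hcpos.le A, Real.sqrt_mul (show (0:ℝ) ≤ (j:ℝ) - 1 by linarith), mul_inv]
    calc (1 + dj) ^ (-(7/2 : ℝ)) * (1 + dj) ^ (-(1/2 : ℝ))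
        ≤ (1 + d) ^ (-(7/2 : ℝ)) * ((c * A) ^ (-(1/2 : ℝ))) := by
          exact mul_le_mul hb1 hb2 (Real.rpow_nonneg (by linarith) _)
            (Real.rpow_nonneg (by linarith) _)
    _ = _ := by rw [hb3]
  -- sum the bounds
  have hsum := Finset.sum_le_sum step
  refine le_trans hsum ?_
  rw [← Finset.mul_sum]
  rw [show (4 : ℝ) * (Real.sqrt c)⁻¹ * (1 + d) ^ (-(7/2 : ℝ))
      = (1 + d) ^ (-(7/2 : ℝ)) * ((Real.sqrt c)⁻¹ * 4) from by ring]
  apply mul_le_mul_of_nonneg_left _ (Real.rpow_nonneg (by linarith) _)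
  rw [← Finset.mul_sum]
  apply mul_le_mul_of_nonneg_left _ (by positivity)
  -- main combinatorial sum bound
  have hbound : ∀ j ∈ Finset.Icc 2 m,
      (Real.sqrt ((j:ℝ) - 1) * Real.sqrt ((m:ℝ) + 1 - (j:ℝ)))⁻¹ ≤
      (Real.sqrt m)⁻¹ * ((Real.sqrt ((j:ℝ) - 1))⁻¹ + (Real.sqrt ((m:ℝ) + 1 - (j:ℝ)))⁻¹) := by
    intro j hj
    obtain ⟨hj2, hjm⟩ := Finset.mem_Icc.1 hj
    have hj2' : (2:ℝ) ≤ (j:ℝ) := by exact_mod_cast hj2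
    have hjm' : (j:ℝ) ≤ (m:ℝ) := by exact_mod_cast hjm
    have := inv_sqrt_mul_le ((j:ℝ) - 1) ((m:ℝ) + 1 - (j:ℝ)) (by linarith) (by linarith)
    rwa [show (j:ℝ) - 1 + ((m:ℝ) + 1 - (j:ℝ)) = (m:ℝ) from by ring] at this
  refine le_trans (Finset.sum_le_sum hbound) ?_
  rw [← Finset.mul_sum, Finset.sum_add_distrib]
  have e1 : ∑ j ∈ Finset.Icc 2 m, (Real.sqrt ((j:ℝ) - 1))⁻¹
      = ∑ k ∈ Finset.Icc 1 (m-1), (Real.sqrt (k:ℝ))⁻¹ := by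
    apply Finset.sum_nbij' (fun j => j - 1) (fun k => k + 1)
    · intro a ha; simp only [Finset.mem_Icc] at ha ⊢; omega
    · intro a ha; simp only [Finset.mem_Icc] at ha ⊢; omega
    · intro a ha; simp only [Finset.mem_Icc] at ha; omega
    · intro a ha; simp only [Finset.mem_Icc] at ha; omega
    · intro a ha; simp only [Finset.mem_Icc] at ha
      congr 2
      have : (1:ℕ) ≤ a := by omega
      push_cast [Nat.cast_sub this]
      ring
  have e2 : ∑ j ∈ Finset.Icc 2 m, (Real.sqrt ((m:ℝ) + 1 - (j:ℝ)))⁻¹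
      = ∑ k ∈ Finset.Icc 1 (m-1), (Real.sqrt (k:ℝ))⁻¹ := by
    apply Finset.sum_nbij' (fun j => m + 1 - j) (fun k => m + 1 - k)
    · intro a ha; simp only [Finset.mem_Icc] at ha ⊢; omega
    · intro a ha; simp only [Finset.mem_Icc] at ha ⊢; omega
    · intro a ha; simp only [Finset.mem_Icc] at ha; omega
    · intro a ha; simp only [Finset.mem_Icc] at ha; omega
    · intro a ha; simp only [Finset.mem_Icc] at ha
      congr 2
      have : a ≤ m + 1 := by omega
      push_cast [Nat.cast_sub this]
      ring
  rw [e1, e2]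
  have hS : ∑ k ∈ Finset.Icc 1 (m-1), (Real.sqrt (k:ℝ))⁻¹ ≤ 2 * Real.sqrt m := by
    refine le_trans (sum_inv_sqrt_le (m-1)) ?_
    have : ((m-1:ℕ):ℝ) ≤ (m:ℝ) := by
      have : (m-1:ℕ) ≤ m := by omega
      exact_mod_cast this
    have := Real.sqrt_le_sqrt this
    linarith
  have hsm : (0:ℝ) < Real.sqrt m := Real.sqrt_pos.2 hm0
  rw [inv_mul_le_iff₀ hsm] -- (√m)⁻¹ * S ≤ 4 ↔ S ≤ 4*√m? check direction
  linarith

end
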